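/- For the add-the-reciprocal sequence x_0 = 1, x_{k+1} = x_k + 1/x_k, the limit of x_k^2 / k as k → ∞ equals 2 (equivalently x_k / sqrt(k) → sqrt 2). -/

import Mathlib

open Filter

theorem stmt_5 (x : ℕ → ℝ)
    (h0 : x 0 = 1)
    (hrec : ∀ k, x (k + 1) = x k + 1 / x k) :
    Tendsto (fun k : ℕ => x k ^ 2 / (k : ℝ)) atTop (nhds 2) := by
  have hpos : ∀ k, 0 < x k := by
    intro k
    induction k with
    | zero => simp [h0]
    | succ n ih =>
      rw [hrec]
      positivity
  have hsq : ∀ k, x (k + 1) ^ 2 = x k ^ 2 + 2 + 1 / x k ^ 2 := by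
    intro k
    have hx := (hpos k).ne'
    rw [hrec]
    field_simp
    ring
  have hlow : ∀ k : ℕ, 2 * k + 1 ≤ x k ^ 2 := by
    intro k
    induction k with
    | zero => simp [h0]
    | succ n ih =>
      rw [hsq]
      have : 0 ≤ 1 / x n ^ 2 := by positivity
      push_cast
      nlinarith
  have hup : ∀ k : ℕ, x k ^ 2 ≤ 2 * k + 1 + ∑ i ∈ Finset.range k, 1 / (2 * (i : ℝ) + 1) := by
    intro k
    induction k with
    | zero => simp [h0]
    | succ n ih =>
      rw [hsq, Finset.sum_range_succ]
      have h1 : (0:ℝ) < 2 * n + 1 := by positivity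
      have h2 : 1 / x n ^ 2 ≤ 1 / (2 * (n : ℝ) + 1) :=
        one_div_le_one_div_of_le h1 (hlow n)
      push_cast
      linarith
  have hc : Tendsto (fun n : ℕ => (n⁻¹ : ℝ) * ∑ i ∈ Finset.range n, 1 / (2 * (i : ℝ) + 1))
      atTop (nhds 0) := by
    apply Filter.Tendsto.cesaro
    have : Tendsto (fun i : ℕ => 2 * (i : ℝ) + 1) atTop atTop := by
      apply Filter.tendsto_atTop_add_const_right
      exact (tendsto_natCast_atTop_atTop).const_mul_atTop (by norm_num)
    simpa [Pi.inv_def] using this.inv_tendsto_atTop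
  have hinv : Tendsto (fun n : ℕ => (n : ℝ)⁻¹) atTop (nhds 0) := tendsto_inv_atTop_zero.comp tendsto_natCast_atTop_atTop
  have hlo' : Tendsto (fun n : ℕ => 2 + (n : ℝ)⁻¹) atTop (nhds 2) := by
    simpa using tendsto_const_nhds.add hinv
  have hup' : Tendsto (fun n : ℕ => 2 + (n : ℝ)⁻¹ + (n⁻¹ : ℝ) * ∑ i ∈ Finset.range n, 1 / (2 * (i : ℝ) + 1)) atTop (nhds 2) := by
    simpa using hlo'.add hc
  apply tendsto_of_tendsto_of_tendsto_of_le_of_le' hlo' hup'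
  · filter_upwards [eventually_gt_atTop 0] with n hn
    have hn' : (0:ℝ) < n := by exact_mod_cast hn
    rw [le_div_iff₀ hn']
    have := hlow n
    field_simp
    nlinarith
  · filter_upwards [eventually_gt_atTop 0] with n hn
    have hn' : (0:ℝ) < n := by exact_mod_cast hn
    rw [div_le_iff₀ hn']
    have := hup n
    have hS : (0:ℝ) ≤ ∑ i ∈ Finset.range n, 1 / (2 * (i : ℝ) + 1) := by
      apply Finset.sum_nonneg; intro i _; positivity
    have h3 : (n:ℝ)⁻¹ * (n:ℝ) = 1 := inv_mul_cancel₀ hn'.ne'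
    nlinarith
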